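/- Let n ≥ 1, κ ∈ [0,1], and 1 ≤ j ≤ n. Summing the outcome probabilities ‖A_k W_n‖² over all outcome strings k : Fin n → Fin 2 with exactly j zeros yields the aggregated probability ℘_{0,j} = C(n,j)·(j/n)·κ^{n-j}·(1-κ)^{j-1}. -/

import Mathlib

open scoped Classical

/-- The `n`-qubit W state: amplitude `1/√n` on strings with exactly one `1`. -/
noncomputable def Wstate (n : ℕ) : (Fin n → Fin 2) → ℂ := fun x =>
  if (Finset.univ.filter fun m => x m = 1).card = 1 then ((1 / Real.sqrt n : ℝ) : ℂ) else 0

/-- Entries of the single-parameter Kraus operators: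
`d(0,0)=√(1-κ)`, `d(0,1)=1`, `d(1,0)=√κ`, `d(1,1)=0`. -/
noncomputable def dEntry (κ : ℝ) : Fin 2 → Fin 2 → ℂ := fun a b =>
  if a = 0 then (if b = 0 then ((Real.sqrt (1 - κ) : ℝ) : ℂ) else 1)
  else (if b = 0 then ((Real.sqrt κ : ℝ) : ℂ) else 0)

/-- The product Kraus operator `A_k` associated with outcome string `k`. -/
noncomputable def krausApply (n : ℕ) (κ : ℝ) (k : Fin n → Fin 2)
    (v : (Fin n → Fin 2) → ℂ) : (Fin n → Fin 2) → ℂ :=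
  fun x => (∏ m, dEntry κ (k m) (x m)) * v x

/-- Summing the outcome probabilities `‖A_k W_n‖²` over all outcome strings `k`
with exactly `j` zeros yields `℘_{0,j} = C(n,j)·(j/n)·κ^{n-j}·(1-κ)^{j-1}`. -/
lemma abs_dEntry_zero (κ : ℝ) (h0 : 0 ≤ κ) (h1 : κ ≤ 1) (a : Fin 2) :
    ‖dEntry κ a 0‖ ^ 2 = if a = 0 then 1 - κ else κ := by
  fin_cases a <;> simp [dEntry, Complex.norm_real, Real.norm_eq_abs, abs_of_nonneg (Real.sqrt_nonneg _),
    Real.sq_sqrt, h0, sub_nonneg.mpr h1]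

lemma abs_dEntry_one (κ : ℝ) (a : Fin 2) :
    ‖dEntry κ a 1‖ ^ 2 = if a = 0 then 1 else 0 := by
  fin_cases a <;> simp [dEntry]

lemma innerSumW (n j : ℕ) (κ : ℝ) (h0 : 0 ≤ κ) (h1 : κ ≤ 1) (hn : 1 ≤ n)
    (hj1 : 1 ≤ j) (hjn : j ≤ n) (k : Fin n → Fin 2)
    (hk : (Finset.univ.filter fun m => k m = 0).card = j) :
    ∑ x : Fin n → Fin 2, ‖krausApply n κ k (Wstate n) x‖ ^ 2
      = ((j:ℝ)/(n:ℝ)) * (κ ^ (n-j) * (1-κ) ^ (j-1)) := by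
  classical
  set e : Fin n → (Fin n → Fin 2) := fun i m => if m = i then 1 else 0 with he
  have hfe : ∀ i, (Finset.univ.filter fun m => e i m = 1) = {i} := by
    intro i; ext m
    by_cases h : m = i <;> simp [he, h]
  have heinj : Function.Injective e := by
    intro i i' h
    by_contra hne
    have h2 := congrFun h i
    simp [he, hne] at h2
  -- the summand is supported on the image of e
  have hsupp : ∀ x : Fin n → Fin 2, x ∉ Finset.univ.image e →
      ‖krausApply n κ k (Wstate n) x‖ ^ 2 = 0 := by
    intro x hx
    have hW : Wstate n x = 0 := by
      rw [Wstate]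
      rw [if_neg]
      intro hc
      obtain ⟨i, hi⟩ := Finset.card_eq_one.mp hc
      apply hx
      refine Finset.mem_image.mpr ⟨i, Finset.mem_univ _, ?_⟩
      funext m
      have hm : x m = 1 ↔ m = i := by
        constructor
        · intro h'
          have : m ∈ (Finset.univ.filter fun m => x m = 1) := by simp [h']
          rw [hi] at this; simpa using this
        · intro h'
          have : m ∈ ({i} : Finset (Fin n)) := by simp [h']
          rw [← hi] at this; simpa using this
      by_cases hmi : m = i
      · subst hmi
        simp [he, hm.mpr rfl]
      · have : x m ≠ 1 := fun hc' => hmi (hm.mp hc')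
        have hx0 : x m = 0 := by omega
        simp [he, hmi, hx0]
    simp [krausApply, hW]
  rw [← Finset.sum_subset (Finset.subset_univ (Finset.univ.image e))
      (fun x _ hx => hsupp x hx)]
  rw [Finset.sum_image (fun i _ i' _ h => heinj h)]
  -- value at e i
  have hval : ∀ i : Fin n,
      ‖krausApply n κ k (Wstate n) (e i)‖ ^ 2
        = (if k i = 0 then κ ^ (n-j) * (1-κ) ^ (j-1) else 0) * (1/(n:ℝ)) := by
    intro i
    have hW : Wstate n (e i) = ((1 / Real.sqrt n : ℝ) : ℂ) := by
      rw [Wstate, if_pos]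
      rw [hfe i]; simp
    have habs : ‖krausApply n κ k (Wstate n) (e i)‖ ^ 2
        = (∏ m, ‖dEntry κ (k m) (e i m)‖ ^ 2)
          * ‖Wstate n (e i)‖ ^ 2 := by
      rw [krausApply]
      rw [norm_mul, mul_pow, norm_prod, Finset.prod_pow]
    rw [habs, hW]
    have hWsq : ‖((1 / Real.sqrt n : ℝ) : ℂ)‖ ^ 2 = 1/(n:ℝ) := by
      rw [Complex.norm_real, Real.norm_eq_abs, sq_abs]
      rw [div_pow, one_pow, Real.sq_sqrt (by positivity)]
    rw [hWsq]
    congr 1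
    rw [← Finset.mul_prod_erase Finset.univ _ (Finset.mem_univ i)]
    have hei : e i i = 1 := by simp [he]
    rw [hei, abs_dEntry_one]
    by_cases hki : k i = 0
    · rw [if_pos hki, if_pos hki, one_mul]
      have hprod : ∀ m ∈ Finset.univ.erase i,
          ‖dEntry κ (k m) (e i m)‖ ^ 2
            = if k m = 0 then 1 - κ else κ := by
        intro m hm
        have hmi : m ≠ i := Finset.ne_of_mem_erase hm
        have : e i m = 0 := by simp [he, hmi]
        rw [this, abs_dEntry_zero κ h0 h1]
      rw [Finset.prod_congr rfl hprod, Finset.prod_ite, Finset.prod_const,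
        Finset.prod_const]
      have hc1 : ((Finset.univ.erase i).filter fun m => k m = 0).card = j - 1 := by
        rw [Finset.filter_erase, Finset.card_erase_of_mem (by simp [hki]), hk]
      have hc2 : ((Finset.univ.erase i).filter fun m => ¬ k m = 0).card = n - j := by
        rw [Finset.filter_erase, Finset.erase_eq_of_notMem (by simp [hki])]
        have hh := Finset.card_filter_add_card_filter_not
          (s := (Finset.univ : Finset (Fin n))) (p := fun m => k m = 0)
        rw [hk, Finset.card_univ, Fintype.card_fin] at hh
        omega
      rw [hc1, hc2]
      ring
    · simp [hki]
  rw [Finset.sum_congr rfl fun i _ => hval i]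
  rw [← Finset.sum_mul, ← Finset.sum_filter, Finset.sum_const, hk, nsmul_eq_mul]
  ring


lemma card_outcomes (n j : ℕ) :
    (Finset.univ.filter
      (fun k : Fin n → Fin 2 => (Finset.univ.filter fun m => k m = 0).card = j)).card
      = n.choose j := by
  classical
  have h := Finset.card_powersetCard j (Finset.univ : Finset (Fin n))
  rw [Finset.card_univ, Fintype.card_fin] at h
  rw [← h]
  apply Finset.card_bij (fun k _ => Finset.univ.filter fun m => k m = 0)
  · intro k hk
    simp only [Finset.mem_filter, Finset.mem_univ, true_and] at hk
    simp [Finset.mem_powersetCard, hk]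
  · intro k₁ h₁ k₂ h₂ hf
    funext m
    have hiff : (m ∈ Finset.univ.filter fun m => k₁ m = 0) ↔
        (m ∈ Finset.univ.filter fun m => k₂ m = 0) := by rw [hf]
    simp only [Finset.mem_filter, Finset.mem_univ, true_and] at hiff
    revert hiff
    generalize k₁ m = a; generalize k₂ m = b
    revert a b; decide
  · intro s hs
    simp only [Finset.mem_powersetCard] at hs
    refine ⟨fun m => if m ∈ s then 0 else 1, ?_, ?_⟩
    · simp only [Finset.mem_filter, Finset.mem_univ, true_and]
      rw [← hs.2]
      congr 1
      ext m
      simp only [Finset.mem_filter, Finset.mem_univ, true_and]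
      by_cases hm : m ∈ s <;> simp [hm]
    · ext m
      simp only [Finset.mem_filter, Finset.mem_univ, true_and]
      by_cases hm : m ∈ s <;> simp [hm]

theorem aggregated_outcome_probability (n : ℕ) (hn : 1 ≤ n) (κ : ℝ)
    (hκ : κ ∈ Set.Icc (0:ℝ) 1) (j : ℕ) (hj1 : 1 ≤ j) (hjn : j ≤ n) :
    ∑ k ∈ Finset.univ.filter
        (fun k : Fin n → Fin 2 => (Finset.univ.filter fun m => k m = 0).card = j),
      ∑ x : Fin n → Fin 2, ‖krausApply n κ k (Wstate n) x‖ ^ 2 =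
      (n.choose j : ℝ) * ((j : ℝ) / (n : ℝ)) * κ ^ (n - j) * (1 - κ) ^ (j - 1) := by
  obtain ⟨h0, h1⟩ := hκ
  rw [Finset.sum_congr rfl fun k hk => innerSumW n j κ h0 h1 hn hj1 hjn k
      (Finset.mem_filter.mp hk).2]
  rw [Finset.sum_const, card_outcomes, nsmul_eq_mul]
  ring
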